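/- For all natural numbers ℓ, m, the pointwise product φ_ℓ·φ_m satisfies φ_ℓ·φ_m − C(ℓ+m, ℓ)·φ_{ℓ+m} ∈ Ω_{ℓ+m−1}, where C(ℓ+m, ℓ) is the binomial coefficient reduced mod p. In particular, φ_ℓ·φ_m ∈ Ω_{ℓ+m}. -/

import Mathlib

/-- The binomial phi function `φ_m : ℤ/p^kℤ → ℤ/pℤ`, `φ_m(x) = C(x̄, m) mod p`. -/
def phi (p k m : ℕ) (x : ZMod (p ^ k)) : ZMod p := (x.val.choose m : ZMod p)

lemma key_choose (l m n : ℕ) :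
    n.choose l * n.choose m =
      ∑ i ∈ Finset.range (l + m + 1), i.choose l * l.choose (l + m - i) * n.choose i := by
  rcases lt_or_ge n l with hnl | hln
  · rw [Nat.choose_eq_zero_of_lt hnl, Nat.zero_mul]
    refine (Finset.sum_eq_zero fun i _ => ?_).symm
    rcases lt_or_ge i l with hil | hli
    · rw [Nat.choose_eq_zero_of_lt hil, Nat.zero_mul, Nat.zero_mul]
    · rw [Nat.choose_eq_zero_of_lt (lt_of_lt_of_le hnl hli), Nat.mul_zero]
  · have hsplit : n = l + (n - l) := (Nat.add_sub_cancel' hln).symm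
    have hvand : n.choose m =
        ∑ j ∈ Finset.range (m + 1), l.choose j * (n - l).choose (m - j) := by
      conv_lhs => rw [hsplit]
      rw [Nat.add_choose_eq l (n - l) m, Finset.Nat.sum_antidiagonal_eq_sum_range_succ_mk]
    have hRHS : ∑ i ∈ Finset.range (l + m + 1), i.choose l * l.choose (l + m - i) * n.choose i
        = ∑ j ∈ Finset.range (m + 1),
            (l + j).choose l * l.choose (l + m - (l + j)) * n.choose (l + j) := by
      rw [Finset.range_eq_Ico,
        ← Finset.sum_Ico_consecutive _ (Nat.zero_le l) (by omega : l ≤ l + m + 1),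
        Finset.sum_eq_zero (fun i hi => by
          simp only [Finset.mem_Ico] at hi
          rw [Nat.choose_eq_zero_of_lt hi.2, Nat.zero_mul, Nat.zero_mul]),
        zero_add, Finset.sum_Ico_eq_sum_range]
      have h1 : l + m + 1 - l = m + 1 := by omega
      rw [h1, Finset.range_eq_Ico]
    rw [hvand, hRHS, Finset.mul_sum,
      ← Finset.sum_range_reflect
        (fun j => (l + j).choose l * l.choose (l + m - (l + j)) * n.choose (l + j)) (m + 1)]
    refine Finset.sum_congr rfl fun j hj => ?_
    simp only [Finset.mem_range] at hj
    have hj' : j ≤ m := by omega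
    have h1 : m + 1 - 1 - j = m - j := by omega
    rw [h1]
    have hterm : n.choose l * ((n - l).choose (m - j))
        = (l + (m - j)).choose l * n.choose (l + (m - j)) := by
      rcases le_or_gt (l + (m - j)) n with h1 | h1
      · have h2 := Nat.choose_mul (n := n) (Nat.le_add_right l (m - j))
        simp only [Nat.add_sub_cancel_left] at h2
        rw [← h2]; ring
      · have h3 : n - l < m - j := by omega
        rw [Nat.choose_eq_zero_of_lt h3, Nat.mul_zero, Nat.choose_eq_zero_of_lt h1,
          Nat.mul_zero]
    have h4 : l + m - (l + (m - j)) = j := by omega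
    rw [h4]
    calc n.choose l * (l.choose j * (n - l).choose (m - j))
        = l.choose j * (n.choose l * (n - l).choose (m - j)) := by ring
      _ = l.choose j * ((l + (m - j)).choose l * n.choose (l + (m - j))) := by rw [hterm]
      _ = (l + (m - j)).choose l * l.choose j * n.choose (l + (m - j)) := by ring


lemma phi_mul_eq (p k l m : ℕ) (x : ZMod (p ^ k)) :
    phi p k l x * phi p k m x =
      ∑ i ∈ Finset.range (l + m + 1),
        ((i.choose l * l.choose (l + m - i) : ℕ) : ZMod p) * phi p k i x := by
  simp only [phi]
  rw [← Nat.cast_mul, key_choose l m x.val]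
  push_cast
  rfl

/-- For all `ℓ, m ∈ ℕ`,
`φ_ℓ·φ_m − C(ℓ+m, ℓ)·φ_{ℓ+m} ∈ Ω_{ℓ+m−1}`; in particular `φ_ℓ·φ_m ∈ Ω_{ℓ+m}`. -/
theorem stmt_12 (p k l m : ℕ) [Fact p.Prime] (hk : 1 ≤ k) :
    ((fun x => phi p k l x * phi p k m x -
        ((l + m).choose l : ZMod p) * phi p k (l + m) x)
      ∈ Submodule.span (ZMod p)
        {g : ZMod (p ^ k) → ZMod p | ∃ i < l + m, g = phi p k i}) ∧
    ((fun x => phi p k l x * phi p k m x)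
      ∈ Submodule.span (ZMod p)
        {g : ZMod (p ^ k) → ZMod p | ∃ i ≤ l + m, g = phi p k i}) := by
  constructor
  · have heq : (fun x => phi p k l x * phi p k m x -
        ((l + m).choose l : ZMod p) * phi p k (l + m) x)
        = ∑ i ∈ Finset.range (l + m),
            ((i.choose l * l.choose (l + m - i) : ℕ) : ZMod p) • phi p k i := by
      funext x
      have h := phi_mul_eq p k l m x
      rw [Finset.sum_range_succ, Nat.sub_self, Nat.choose_zero_right, Nat.mul_one] at h
      simp only [Finset.sum_apply, Pi.smul_apply, smul_eq_mul]
      rw [h, add_sub_cancel_right]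
    rw [heq]
    exact Submodule.sum_mem _ fun i hi =>
      Submodule.smul_mem _ _ (Submodule.subset_span ⟨i, Finset.mem_range.mp hi, rfl⟩)
  · have heq : (fun x => phi p k l x * phi p k m x)
        = ∑ i ∈ Finset.range (l + m + 1),
            ((i.choose l * l.choose (l + m - i) : ℕ) : ZMod p) • phi p k i := by
      funext x
      simp only [Finset.sum_apply, Pi.smul_apply, smul_eq_mul]
      exact phi_mul_eq p k l m x
    rw [heq]
    exact Submodule.sum_mem _ fun i hi =>
      Submodule.smul_mem _ _ (Submodule.subset_span
        ⟨i, Nat.lt_succ_iff.mp (Finset.mem_range.mp hi), rfl⟩)
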